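/- arXiv:2310.00708 — 3 statements merged into one kernel-verified Lean document; each statement's English description precedes it below -/
import Mathlib

section
/- If ξ̂ satisfies |ξ̂ - ξ_α| < δ where ξ_α minimizes φ_α, then φ_α(ξ̂) - κ_α δ < min_ξ φ_α(ξ) ≤ φ_α(ξ̂), where κ_α = max{(2-α)/(1-α), α/(1-α)}. -/
open MeasureTheory

/-- If `|ξ̂ - ξ_α| < δ` where `ξ_α` minimizes `φ_α`, then
`φ_α(ξ̂) - κ_α δ < min_ξ φ_α(ξ) ≤ φ_α(ξ̂)` with `κ_α = max ((2-α)/(1-α)) (α/(1-α))`. -/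
theorem stmt6 {Ω : Type*} [MeasurableSpace Ω] (P : Measure Ω) [IsProbabilityMeasure P]
    (L : Ω → ℝ) (hL : Integrable L P) (α : ℝ) (hα : α ∈ Set.Ico (0 : ℝ) 1)
    (hint : ∀ ξ : ℝ, Integrable (fun ω => max (L ω - ξ) 0) P)
    (ξα ξhat δ : ℝ) (hδ : 0 < δ) (hclose : |ξhat - ξα| < δ)
    (hmin : ∀ ξ : ℝ,
      ξα + (1 / (1 - α)) * ∫ ω, max (L ω - ξα) 0 ∂P ≤
        ξ + (1 / (1 - α)) * ∫ ω, max (L ω - ξ) 0 ∂P) :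
    (ξhat + (1 / (1 - α)) * ∫ ω, max (L ω - ξhat) 0 ∂P) -
        max ((2 - α) / (1 - α)) (α / (1 - α)) * δ <
      ξα + (1 / (1 - α)) * ∫ ω, max (L ω - ξα) 0 ∂P ∧
    ξα + (1 / (1 - α)) * ∫ ω, max (L ω - ξα) 0 ∂P ≤
      ξhat + (1 / (1 - α)) * ∫ ω, max (L ω - ξhat) 0 ∂P := by
  obtain ⟨hα0, hα1⟩ := hα
  have h1α : (0:ℝ) < 1 - α := by linarith
  refine ⟨?_, hmin ξhat⟩
  have hdiff : ∫ ω, max (L ω - ξhat) 0 ∂P - ∫ ω, max (L ω - ξα) 0 ∂P ≤ |ξhat - ξα| := by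
    rw [← integral_sub (hint ξhat) (hint ξα)]
    have : ∫ ω, (max (L ω - ξhat) 0 - max (L ω - ξα) 0) ∂P ≤ ∫ _ω, |ξhat - ξα| ∂P := by
      refine integral_mono ((hint ξhat).sub (hint ξα)) (integrable_const _) (fun ω => ?_)
      calc max (L ω - ξhat) 0 - max (L ω - ξα) 0 ≤ |max (L ω - ξhat) 0 - max (L ω - ξα) 0| :=
            le_abs_self _
        _ ≤ |(L ω - ξhat) - (L ω - ξα)| := abs_max_sub_max_le_abs _ _ _
        _ = |ξhat - ξα| := by rw [abs_sub_comm]; ring_nf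
    simpa using this
  have hkey : (2 - α) / (1 - α) ≤ max ((2 - α) / (1 - α)) (α / (1 - α)) := le_max_left _ _
  have hpos : (0:ℝ) < (2 - α) / (1 - α) := div_pos (by linarith) h1α
  have hinv : (0:ℝ) < 1 / (1 - α) := by positivity
  have habs : ξhat - ξα ≤ |ξhat - ξα| := le_abs_self _
  have h2 : (1 / (1 - α)) * (∫ ω, max (L ω - ξhat) 0 ∂P - ∫ ω, max (L ω - ξα) 0 ∂P)
      ≤ (1 / (1 - α)) * |ξhat - ξα| := by
    exact mul_le_mul_of_nonneg_left hdiff hinv.le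
  have hsum : (ξhat + (1 / (1 - α)) * ∫ ω, max (L ω - ξhat) 0 ∂P) -
      (ξα + (1 / (1 - α)) * ∫ ω, max (L ω - ξα) 0 ∂P) ≤ (2 - α) / (1 - α) * |ξhat - ξα| := by
    have : (2 - α) / (1 - α) = 1 + 1 / (1 - α) := by field_simp; ring
    rw [this]
    nlinarith [h2, habs]
  have hlt : (2 - α) / (1 - α) * |ξhat - ξα| < max ((2 - α) / (1 - α)) (α / (1 - α)) * δ :=
    lt_of_lt_of_le (by exact mul_lt_mul_of_pos_left hclose hpos)
      (mul_le_mul_of_nonneg_right hkey hδ.le)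
  linarith
end

section
/- Suppose |ξ̂ - ξ_α| ≤ δ with ξ̂ = ξ_α + δ. Then φ_α(ξ̂) - φ_α(ξ_α) ≤ ((2-α)/(1-α)) δ. -/
open MeasureTheory

/-- Upward perturbation: with `ξ̂ = ξ_α + δ`, `φ_α(ξ̂) - φ_α(ξ_α) ≤ ((2-α)/(1-α)) δ`,
where `ξ_α = VaR_α(L)`. -/
theorem stmt7 {Ω : Type*} [MeasurableSpace Ω] (P : Measure Ω) [IsProbabilityMeasure P]
    (L : Ω → ℝ) (hL : Integrable L P) (α : ℝ) (hα : α ∈ Set.Ico (0 : ℝ) 1)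
    (hint : ∀ ξ : ℝ, Integrable (fun ω => max (L ω - ξ) 0) P)
    (ξα : ℝ) (hVaR : ξα = sInf {l : ℝ | α ≤ (P {ω | L ω ≤ l}).toReal})
    (δ : ℝ) (hδ : 0 ≤ δ) (ξhat : ℝ) (hξhat : ξhat = ξα + δ) :
    (ξhat + (1 / (1 - α)) * ∫ ω, max (L ω - ξhat) 0 ∂P) -
      (ξα + (1 / (1 - α)) * ∫ ω, max (L ω - ξα) 0 ∂P) ≤
    ((2 - α) / (1 - α)) * δ := by
  obtain ⟨hα0, hα1⟩ := hα
  have h1α : (0:ℝ) < 1 - α := by linarith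
  have hmono : ∫ ω, max (L ω - ξhat) 0 ∂P ≤ ∫ ω, max (L ω - ξα) 0 ∂P := by
    apply integral_mono (hint ξhat) (hint ξα)
    intro ω
    have : L ω - ξhat ≤ L ω - ξα := by rw [hξhat]; linarith
    exact max_le_max this le_rfl
  have hcoef : (0:ℝ) ≤ 1 / (1 - α) := by positivity
  have h2 : (1:ℝ) ≤ (2 - α) / (1 - α) := by
    rw [le_div_iff₀ h1α]; linarith
  calc (ξhat + (1 / (1 - α)) * ∫ ω, max (L ω - ξhat) 0 ∂P) -
      (ξα + (1 / (1 - α)) * ∫ ω, max (L ω - ξα) 0 ∂P)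
      ≤ ξhat - ξα := by nlinarith [mul_le_mul_of_nonneg_left hmono hcoef]
    _ = δ := by rw [hξhat]; ring
    _ ≤ ((2 - α) / (1 - α)) * δ := le_mul_of_one_le_left hδ h2
end

section
/- Suppose ξ̂ = ξ_α - δ for δ ≥ 0. Then φ_α(ξ̂) - φ_α(ξ_α) ≤ (α/(1-α)) δ. -/
open MeasureTheory

/-- Downward perturbation: with `ξ̂ = ξ_α - δ`, `φ_α(ξ̂) - φ_α(ξ_α) ≤ (α/(1-α)) δ`,
where `ξ_α = VaR_α(L)`. -/
theorem stmt8 {Ω : Type*} [MeasurableSpace Ω] (P : Measure Ω) [IsProbabilityMeasure P]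
    (L : Ω → ℝ) (hL : Integrable L P) (α : ℝ) (hα : α ∈ Set.Ico (0 : ℝ) 1)
    (hint : ∀ ξ : ℝ, Integrable (fun ω => max (L ω - ξ) 0) P)
    (ξα : ℝ) (hVaR : ξα = sInf {l : ℝ | α ≤ (P {ω | L ω ≤ l}).toReal})
    (δ : ℝ) (hδ : 0 ≤ δ) (ξhat : ℝ) (hξhat : ξhat = ξα - δ) :
    (ξhat + (1 / (1 - α)) * ∫ ω, max (L ω - ξhat) 0 ∂P) -
      (ξα + (1 / (1 - α)) * ∫ ω, max (L ω - ξα) 0 ∂P) ≤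
    (α / (1 - α)) * δ := by
  have hα1 : (0:ℝ) < 1 - α := by linarith [hα.2]
  have hkey : (∫ ω, max (L ω - ξhat) 0 ∂P) ≤ (∫ ω, max (L ω - ξα) 0 ∂P) + δ := by
    have h1 : (∫ ω, max (L ω - ξhat) 0 ∂P) ≤ ∫ ω, (max (L ω - ξα) 0 + δ) ∂P := by
      refine integral_mono (hint ξhat) ((hint ξα).add (integrable_const δ)) ?_
      intro ω
      simp only [hξhat]
      rcases le_total (L ω - ξα) 0 with h | h
      · have : L ω - (ξα - δ) ≤ δ := by linarith
        simp only [max_le_iff]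
        constructor <;> [linarith [le_max_right (L ω - ξα) (0:ℝ)];
          positivity]
      · have : max (L ω - ξα) 0 = L ω - ξα := max_eq_left h
        rw [this]
        simp only [max_le_iff]
        constructor <;> linarith
    rwa [integral_add (hint ξα) (integrable_const δ), integral_const,
      probReal_univ, one_smul] at h1
  have h2 : (1 / (1 - α)) * (∫ ω, max (L ω - ξhat) 0 ∂P)
      ≤ (1 / (1 - α)) * ((∫ ω, max (L ω - ξα) 0 ∂P) + δ) := by
    apply mul_le_mul_of_nonneg_left hkey
    positivity
  have : (α / (1 - α)) * δ = -δ + (1 / (1 - α)) * δ := by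
    field_simp
    ring
  rw [mul_add, hξhat] at h2
  rw [this, hξhat]
  linarith
end
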